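/- Let z₀ ∈ ℝ, h > 0, ρ₁ > 0. Let U ⊆ ℝ² be an open set invariant under the reflection (ρ,z) ↦ (ρ, 2z₀ − z) containing the segments [0,ρ₁]×{z₀−h}, [0,ρ₁]×{z₀+h} and {ρ₁}×[z₀−h, z₀+h]. Let σ, ω be continuously differentiable on U ∩ {ρ > 0}, with σ(ρ, 2z₀ − z) = σ(ρ, z) and ω(ρ, 2z₀ − z) = c − ω(ρ, z) for some constant c. Set η = ρ²e^σ, P = (ρ/4)(σ_ρ² − σ_z²) + (ρ/(4η²))(ω_ρ² − ω_z²) and Q = (ρ/2)(σ_ρσ_z + η^{−2}ω_ρω_z), and assume P and Q extend continuously to U. Let q : U → ℝ be continuous on U, continuously differentiable on U ∩ {ρ > 0}, with ∂_ρ q = P and ∂_z q = Q there. Then q(0, z₀ + h) = q(0, z₀ − h). -/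

import Mathlib

/-- Partial derivative with respect to the first (ρ) variable. -/
noncomputable def pdr (f : ℝ × ℝ → ℝ) (p : ℝ × ℝ) : ℝ :=
  deriv (fun x => f (x, p.2)) p.1

/-- Partial derivative with respect to the second (z) variable. -/
noncomputable def pdz (f : ℝ × ℝ → ℝ) (p : ℝ × ℝ) : ℝ :=
  deriv (fun y => f (p.1, y)) p.2

open Set Filter

/-- reflected pdr for a function satisfying f(ρ,2z₀−z) = a f(ρ,z) + b. -/
lemma pdr_sym_aux (z₀ : ℝ) (U : Set (ℝ × ℝ)) (hU : IsOpen U)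
    (f : ℝ × ℝ → ℝ) (a b : ℝ)
    (hsym : ∀ p ∈ U, 0 < p.1 → f (p.1, 2 * z₀ - p.2) = a * f p + b)
    (p : ℝ × ℝ) (hp : p ∈ U) (hp1 : 0 < p.1) :
    pdr f (p.1, 2 * z₀ - p.2) = a * pdr f p := by
  have hev : (fun x => f (x, 2 * z₀ - p.2)) =ᶠ[nhds p.1]
      (fun x => a * f (x, p.2) + b) := by
    have hc : ContinuousAt (fun x : ℝ => (x, p.2)) p.1 := by fun_prop
    have h1 : ∀ᶠ x in nhds p.1, (x, p.2) ∈ U :=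
      hc.preimage_mem_nhds (hU.mem_nhds (by simpa using hp))
    have h2 : ∀ᶠ x in nhds p.1, (0:ℝ) < x := isOpen_Ioi.eventually_mem hp1
    filter_upwards [h1, h2] with x hx hx0
    simpa using hsym (x, p.2) hx hx0
  show deriv (fun x => f (x, 2 * z₀ - p.2)) p.1 = a * deriv (fun x => f (x, p.2)) p.1
  rw [hev.deriv_eq, deriv_add_const, deriv_const_mul_field]

/-- reflected pdz for a function satisfying f(ρ,2z₀−z) = a f(ρ,z) + b. -/
lemma pdz_sym_aux (z₀ : ℝ) (U : Set (ℝ × ℝ)) (hU : IsOpen U)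
    (f : ℝ × ℝ → ℝ) (a b : ℝ)
    (hsym : ∀ p ∈ U, 0 < p.1 → f (p.1, 2 * z₀ - p.2) = a * f p + b)
    (p : ℝ × ℝ) (hp : p ∈ U) (hp1 : 0 < p.1) :
    pdz f (p.1, 2 * z₀ - p.2) = -a * pdz f p := by
  have hev : (fun y => f (p.1, y)) =ᶠ[nhds (2 * z₀ - p.2)]
      (fun y => a * f (p.1, 2 * z₀ - y) + b) := by
    have hc : ContinuousAt (fun y : ℝ => ((p.1 : ℝ), 2 * z₀ - y)) (2 * z₀ - p.2) := by
      fun_prop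
    have h1 : ∀ᶠ y in nhds (2 * z₀ - p.2), ((p.1 : ℝ), 2 * z₀ - y) ∈ U := by
      apply hc.preimage_mem_nhds
      apply hU.mem_nhds
      have : (p.1, 2 * z₀ - (2 * z₀ - p.2)) = p := by
        ext <;> simp <;> ring
      rw [this]; exact hp
    filter_upwards [h1] with y hy
    have := hsym (p.1, 2 * z₀ - y) hy hp1
    simp only at this
    have h2 : 2 * z₀ - (2 * z₀ - y) = y := by ring
    rw [h2] at this
    simpa using this
  show deriv (fun y => f (p.1, y)) (2 * z₀ - p.2) = -a * deriv (fun y => f (p.1, y)) p.2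
  rw [hev.deriv_eq, deriv_add_const, deriv_const_mul_field,
    deriv_comp_const_sub (fun t => f (p.1, t)) (2 * z₀) (2 * z₀ - p.2)]
  have h3 : 2 * z₀ - (2 * z₀ - p.2) = p.2 := by ring
  rw [h3]; ring

/-- for data symmetric about z₀ with σ even and ω odd up to an additive
constant, the values of the metric function q on the two axis points (0, z₀ ± h)
coincide. -/
theorem q_equal_on_axis_sigma_even_omega_odd
    (z₀ h ρ₁ : ℝ) (hh : 0 < h) (hρ₁ : 0 < ρ₁)
    (U : Set (ℝ × ℝ)) (hU : IsOpen U)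
    (hUsym : ∀ p ∈ U, (p.1, 2 * z₀ - p.2) ∈ U)
    (hsegm : ∀ x ∈ Set.Icc (0 : ℝ) ρ₁, (x, z₀ - h) ∈ U)
    (hsegp : ∀ x ∈ Set.Icc (0 : ℝ) ρ₁, (x, z₀ + h) ∈ U)
    (hsegv : ∀ y ∈ Set.Icc (z₀ - h) (z₀ + h), (ρ₁, y) ∈ U)
    (σ ω : ℝ × ℝ → ℝ)
    (hσ : ContDiffOn ℝ 1 σ (U ∩ {p : ℝ × ℝ | 0 < p.1}))
    (hω : ContDiffOn ℝ 1 ω (U ∩ {p : ℝ × ℝ | 0 < p.1}))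
    (c : ℝ)
    (hσsym : ∀ p ∈ U, 0 < p.1 → σ (p.1, 2 * z₀ - p.2) = σ p)
    (hωsym : ∀ p ∈ U, 0 < p.1 → ω (p.1, 2 * z₀ - p.2) = c - ω p)
    (η P Q : ℝ × ℝ → ℝ)
    (hη : ∀ p, η p = p.1 ^ 2 * Real.exp (σ p))
    (hP : ∀ p ∈ U ∩ {p : ℝ × ℝ | 0 < p.1},
      P p = p.1 / 4 * ((pdr σ p) ^ 2 - (pdz σ p) ^ 2)
        + p.1 / (4 * (η p) ^ 2) * ((pdr ω p) ^ 2 - (pdz ω p) ^ 2))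
    (hQ : ∀ p ∈ U ∩ {p : ℝ × ℝ | 0 < p.1},
      Q p = p.1 / 2 * (pdr σ p * pdz σ p + pdr ω p * pdz ω p / (η p) ^ 2))
    (hPcont : ContinuousOn P U) (hQcont : ContinuousOn Q U)
    (q : ℝ × ℝ → ℝ)
    (hqcont : ContinuousOn q U)
    (hqC1 : ContDiffOn ℝ 1 q (U ∩ {p : ℝ × ℝ | 0 < p.1}))
    (hqr : ∀ p ∈ U ∩ {p : ℝ × ℝ | 0 < p.1}, pdr q p = P p)
    (hqz : ∀ p ∈ U ∩ {p : ℝ × ℝ | 0 < p.1}, pdz q p = Q p) :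
    q (0, z₀ + h) = q (0, z₀ - h) := by
  have hop : IsOpen (U ∩ {p : ℝ × ℝ | 0 < p.1}) :=
    hU.inter (isOpen_lt continuous_const continuous_fst)
  -- symmetry of σ, ω partials
  have hσsym' : ∀ p ∈ U, 0 < p.1 → σ (p.1, 2 * z₀ - p.2) = 1 * σ p + 0 := by
    intro p hp h1; simpa using hσsym p hp h1
  have hωsym' : ∀ p ∈ U, 0 < p.1 → ω (p.1, 2 * z₀ - p.2) = (-1) * ω p + c := by
    intro p hp h1; rw [hωsym p hp h1]; ring
  -- symmetry of η
  have hηsym : ∀ p ∈ U, 0 < p.1 → η (p.1, 2 * z₀ - p.2) = η p := by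
    intro p hp h1
    rw [hη, hη]
    simp only
    rw [hσsym p hp h1]
  -- symmetry of P and Q
  have hPsym : ∀ p ∈ U, 0 < p.1 → P (p.1, 2 * z₀ - p.2) = P p := by
    intro p hp h1
    have hpm : p ∈ U ∩ {p : ℝ × ℝ | 0 < p.1} := ⟨hp, h1⟩
    have hpm' : (p.1, 2 * z₀ - p.2) ∈ U ∩ {p : ℝ × ℝ | 0 < p.1} := ⟨hUsym p hp, h1⟩
    rw [hP _ hpm', hP _ hpm]
    simp only
    rw [pdr_sym_aux z₀ U hU σ 1 0 hσsym' p hp h1,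
      pdz_sym_aux z₀ U hU σ 1 0 hσsym' p hp h1,
      pdr_sym_aux z₀ U hU ω (-1) c hωsym' p hp h1,
      pdz_sym_aux z₀ U hU ω (-1) c hωsym' p hp h1,
      hηsym p hp h1]
    ring
  have hQsym : ∀ p ∈ U, 0 < p.1 → Q (p.1, 2 * z₀ - p.2) = -Q p := by
    intro p hp h1
    have hpm : p ∈ U ∩ {p : ℝ × ℝ | 0 < p.1} := ⟨hp, h1⟩
    have hpm' : (p.1, 2 * z₀ - p.2) ∈ U ∩ {p : ℝ × ℝ | 0 < p.1} := ⟨hUsym p hp, h1⟩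
    rw [hQ _ hpm', hQ _ hpm]
    simp only
    rw [pdr_sym_aux z₀ U hU σ 1 0 hσsym' p hp h1,
      pdz_sym_aux z₀ U hU σ 1 0 hσsym' p hp h1,
      pdr_sym_aux z₀ U hU ω (-1) c hωsym' p hp h1,
      pdz_sym_aux z₀ U hU ω (-1) c hωsym' p hp h1,
      hηsym p hp h1]
    ring
  -- derivative facts for q
  have hqdiff : ∀ p ∈ U ∩ {p : ℝ × ℝ | 0 < p.1}, DifferentiableAt ℝ q p := by
    intro p hp
    exact (hqC1.differentiableOn one_ne_zero).differentiableAt (hop.mem_nhds hp)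
  have hderivr : ∀ p ∈ U ∩ {p : ℝ × ℝ | 0 < p.1},
      HasDerivAt (fun x => q (x, p.2)) (P p) p.1 := by
    intro p hp
    have hg : DifferentiableAt ℝ (fun x : ℝ => q (x, p.2)) p.1 := by
      have hc : DifferentiableAt ℝ (fun x : ℝ => ((x : ℝ), p.2)) p.1 := by fun_prop
      exact (hqdiff p hp).comp p.1 hc
    have := hg.hasDerivAt
    rwa [show deriv (fun x => q (x, p.2)) p.1 = P p from hqr p hp] at this
  have hderivz : ∀ p ∈ U ∩ {p : ℝ × ℝ | 0 < p.1},
      HasDerivAt (fun y => q (p.1, y)) (Q p) p.2 := by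
    intro p hp
    have hg : DifferentiableAt ℝ (fun y : ℝ => q (p.1, y)) p.2 := by
      have hc : DifferentiableAt ℝ (fun y : ℝ => ((p.1 : ℝ), y)) p.2 := by fun_prop
      exact (hqdiff p hp).comp p.2 hc
    have := hg.hasDerivAt
    rwa [show deriv (fun y => q (p.1, y)) p.2 = Q p from hqz p hp] at this
  have hle : z₀ - h ≤ z₀ + h := by linarith
  -- horizontal FTC at level z (= z₀±h)
  have hHoriz : ∀ z : ℝ, (∀ x ∈ Set.Icc (0:ℝ) ρ₁, (x, z) ∈ U) →
      (∫ x in (0:ℝ)..ρ₁, P (x, z)) = q (ρ₁, z) - q (0, z) := by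
    intro z hseg
    apply intervalIntegral.integral_eq_sub_of_hasDerivAt_of_le hρ₁.le
    · exact (hqcont.comp (by fun_prop : Continuous fun x : ℝ => ((x:ℝ), z)).continuousOn
        (fun x hx => hseg x hx))
    · intro x hx
      exact hderivr (x, z) ⟨hseg x (Set.mem_Icc.mpr ⟨hx.1.le, hx.2.le⟩), hx.1⟩
    · apply ContinuousOn.intervalIntegrable
      rw [Set.uIcc_of_le hρ₁.le]
      exact hPcont.comp (by fun_prop : Continuous fun x : ℝ => ((x:ℝ), z)).continuousOn
        (fun x hx => hseg x hx)
  have hHp := hHoriz (z₀ + h) hsegp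
  have hHm := hHoriz (z₀ - h) hsegm
  -- the two horizontal integrals coincide
  have hInteq : (∫ x in (0:ℝ)..ρ₁, P (x, z₀ + h)) = ∫ x in (0:ℝ)..ρ₁, P (x, z₀ - h) := by
    apply intervalIntegral.integral_congr_ae
    apply Filter.Eventually.of_forall
    intro x hx
    rw [Set.uIoc_of_le hρ₁.le] at hx
    have hxU : (x, z₀ - h) ∈ U := hsegm x ⟨hx.1.le, hx.2⟩
    have := hPsym (x, z₀ - h) hxU hx.1
    simp only at this
    rw [show 2 * z₀ - (z₀ - h) = z₀ + h by ring] at this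
    exact this
  -- vertical FTC
  have hVert : (∫ y in (z₀ - h)..(z₀ + h), Q (ρ₁, y)) = q (ρ₁, z₀ + h) - q (ρ₁, z₀ - h) := by
    apply intervalIntegral.integral_eq_sub_of_hasDerivAt
      (f := fun y => q (ρ₁, y)) (f' := fun y => Q (ρ₁, y))
    · intro y hy
      rw [Set.uIcc_of_le hle] at hy
      exact hderivz (ρ₁, y) ⟨hsegv y hy, hρ₁⟩
    · apply ContinuousOn.intervalIntegrable
      rw [Set.uIcc_of_le hle]
      exact hQcont.comp (by fun_prop : Continuous fun y : ℝ => ((ρ₁:ℝ), y)).continuousOn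
        (fun y hy => hsegv y hy)
  -- vertical integral vanishes by oddness
  have hVzero : (∫ y in (z₀ - h)..(z₀ + h), Q (ρ₁, y)) = 0 := by
    have h1 : (∫ y in (z₀ - h)..(z₀ + h), Q (ρ₁, 2 * z₀ - y))
        = ∫ y in (z₀ - h)..(z₀ + h), Q (ρ₁, y) := by
      rw [intervalIntegral.integral_comp_sub_left (fun t => Q (ρ₁, t)) (2 * z₀)]
      rw [show 2 * z₀ - (z₀ + h) = z₀ - h by ring, show 2 * z₀ - (z₀ - h) = z₀ + h by ring]
    have h2 : (∫ y in (z₀ - h)..(z₀ + h), Q (ρ₁, 2 * z₀ - y))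
        = ∫ y in (z₀ - h)..(z₀ + h), -Q (ρ₁, y) := by
      apply intervalIntegral.integral_congr_ae
      apply Filter.Eventually.of_forall
      intro y hy
      rw [Set.uIoc_of_le hle] at hy
      have hyU : (ρ₁, y) ∈ U := hsegv y ⟨hy.1.le, hy.2⟩
      exact hQsym (ρ₁, y) hyU hρ₁
    rw [h2, intervalIntegral.integral_neg] at h1
    linarith
  rw [hVzero] at hVert
  rw [hInteq, hHm] at hHp
  linarith
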